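/- Let U and V be unitary n×n complex matrices and let ω = (1/√n) · vec(I) be the normalized maximally entangled vector in ℂ^n ⊗ ℂ^n ≃ ℂ^(n×n). Then ((U·V†) ⊗ I) ω ω* ((U·V†) ⊗ I)† = ω ω* if and only if there exists φ ∈ ℝ with U = e^{iφ} V. -/

import Mathlib

open Matrix Kronecker

def vec {n : ℕ} (M : Matrix (Fin n) (Fin n) ℂ) : Fin n × Fin n → ℂ :=
  fun p => M p.1 p.2

noncomputable def omegaVec (n : ℕ) : Fin n × Fin n → ℂ :=
  fun p => (1 / Real.sqrt n : ℂ) * _root_.vec (1 : Matrix (Fin n) (Fin n) ℂ) p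

lemma mulVec_omega {n : ℕ} (W : Matrix (Fin n) (Fin n) ℂ) (p : Fin n × Fin n) :
    ((W ⊗ₖ (1 : Matrix (Fin n) (Fin n) ℂ)).mulVec (omegaVec n)) p
      = (1 / (Real.sqrt n : ℂ)) * W p.1 p.2 := by
  obtain ⟨i, j⟩ := p
  simp only [Matrix.mulVec, dotProduct, omegaVec, _root_.vec, Matrix.kroneckerMap_apply,
    Matrix.one_apply, Fintype.sum_prod_type]
  simp [Finset.mul_sum, mul_ite, ite_mul, mul_comm]

theorem entanglement_assisted_equivalence (n : ℕ) (U V : Matrix (Fin n) (Fin n) ℂ)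
    (hU : U ∈ Matrix.unitaryGroup (Fin n) ℂ) (hV : V ∈ Matrix.unitaryGroup (Fin n) ℂ) :
    (∀ i j : Fin n × Fin n,
        ((U * Vᴴ) ⊗ₖ (1 : Matrix (Fin n) (Fin n) ℂ)).mulVec (omegaVec n) i *
          (starRingEnd ℂ) (((U * Vᴴ) ⊗ₖ (1 : Matrix (Fin n) (Fin n) ℂ)).mulVec (omegaVec n) j) =
        omegaVec n i * (starRingEnd ℂ) (omegaVec n j)) ↔
      ∃ φ : ℝ, U = Complex.exp (φ * Complex.I) • V := by
  rcases Nat.eq_zero_or_pos n with hn | hn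
  · subst hn
    constructor
    · intro _
      exact ⟨0, Matrix.ext fun i => i.elim0⟩
    · intro _ i
      exact i.1.elim0
  set W := U * Vᴴ with hW
  have hs : ((Real.sqrt n : ℝ) : ℂ) ≠ 0 := by
    exact_mod_cast (Real.sqrt_pos.mpr (by exact_mod_cast hn)).ne'
  have hsc : (starRingEnd ℂ) (1 / (Real.sqrt n : ℂ)) = 1 / (Real.sqrt n : ℂ) := by
    simp [Complex.conj_ofReal]
  have homega : ∀ p : Fin n × Fin n,
      omegaVec n p = (1 / (Real.sqrt n : ℂ)) * (1 : Matrix (Fin n) (Fin n) ℂ) p.1 p.2 := by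
    intro p; rfl
  have key : (∀ i j : Fin n × Fin n,
        (W ⊗ₖ (1 : Matrix (Fin n) (Fin n) ℂ)).mulVec (omegaVec n) i *
          (starRingEnd ℂ) ((W ⊗ₖ (1 : Matrix (Fin n) (Fin n) ℂ)).mulVec (omegaVec n) j) =
        omegaVec n i * (starRingEnd ℂ) (omegaVec n j)) ↔
      (∀ i j : Fin n × Fin n,
        W i.1 i.2 * (starRingEnd ℂ) (W j.1 j.2)
          = (1 : Matrix (Fin n) (Fin n) ℂ) i.1 i.2 *
            (starRingEnd ℂ) ((1 : Matrix (Fin n) (Fin n) ℂ) j.1 j.2)) := by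
    constructor
    · intro h i j
      have := h i j
      rw [mulVec_omega, mulVec_omega, homega i, homega j, _root_.map_mul, _root_.map_mul, hsc] at this
      have hne : (1 / (Real.sqrt n : ℂ)) * (1 / (Real.sqrt n : ℂ)) ≠ 0 := by
        simp [hs]
      field_simp at this
      linear_combination this
    · intro h i j
      rw [mulVec_omega, mulVec_omega, homega i, homega j, _root_.map_mul, _root_.map_mul, hsc]
      linear_combination (1 / (Real.sqrt n : ℂ))^2 * h i j
  rw [key]
  have hVV : V * Vᴴ = 1 := (Matrix.mem_unitaryGroup_iff.mp hV)
  have hVV' : Vᴴ * V = 1 := (Matrix.mem_unitaryGroup_iff'.mp hV)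
  constructor
  · intro h
    set a : Fin n := ⟨0, hn⟩
    set c : ℂ := W a a with hc
    have hcc : c * (starRingEnd ℂ) c = 1 := by
      have := h (a, a) (a, a); simpa using this
    have hWc : W = c • (1 : Matrix (Fin n) (Fin n) ℂ) := by
      ext i j
      have := h (i, j) (a, a)
      simp only [Matrix.one_apply_eq, _root_.map_one, mul_one] at this
      have : W i j * ((starRingEnd ℂ) c * c) = (if i = j then (1:ℂ) else 0) * c := by
        rw [← mul_assoc, this]; simp [Matrix.one_apply]
      rw [mul_comm ((starRingEnd ℂ) c) c, hcc, mul_one] at this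
      simp only [Matrix.smul_apply, Matrix.one_apply, smul_eq_mul, this]
      split <;> simp
    have habs : ‖c‖ = 1 := by
      have : (Complex.normSq c : ℂ) = 1 := by rw [← Complex.mul_conj]; exact hcc
      have h2 : Complex.normSq c = 1 := by exact_mod_cast this
      rw [Complex.norm_def, h2, Real.sqrt_one]
    refine ⟨Complex.arg c, ?_⟩
    have hce : Complex.exp ((Complex.arg c : ℂ) * Complex.I) = c := by
      have := Complex.norm_mul_exp_arg_mul_I c
      rwa [habs, Complex.ofReal_one, one_mul] at this
    have : W * V = c • V := by rw [hWc]; simp [Matrix.smul_mul]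
    rw [hW, Matrix.mul_assoc, hVV', Matrix.mul_one] at this
    rw [this, hce]
  · rintro ⟨φ, rfl⟩
    have hWc : W = Complex.exp ((φ:ℂ) * Complex.I) • (1 : Matrix (Fin n) (Fin n) ℂ) := by
      rw [hW, Matrix.smul_mul, hVV]
    have hcc : Complex.exp ((φ:ℂ) * Complex.I) *
        (starRingEnd ℂ) (Complex.exp ((φ:ℂ) * Complex.I)) = 1 := by
      rw [← Complex.exp_conj]
      simp [← Complex.exp_add, Complex.conj_ofReal]
    intro i j
    rw [hWc]
    simp only [Matrix.smul_apply, smul_eq_mul, _root_.map_mul]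
    have hone : ∀ p : Fin n × Fin n,
        (starRingEnd ℂ) ((1 : Matrix (Fin n) (Fin n) ℂ) p.1 p.2)
          = (1 : Matrix (Fin n) (Fin n) ℂ) p.1 p.2 := by
      intro p; simp only [Matrix.one_apply]; split <;> simp
    rw [hone j]
    linear_combination (1 : Matrix (Fin n) (Fin n) ℂ) i.1 i.2 *
      (1 : Matrix (Fin n) (Fin n) ℂ) j.1 j.2 * hcc
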